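/- arXiv:1201.0435 — 2 statements merged into one kernel-verified Lean document; each statement's English description precedes it below -/
import Mathlib

section
/- Let N=(V,E,s,t) be an acyclic unit-capacity point-to-point network and let F be a k-CF of N with k < C_N(s,t). Then there exists a (k+1)-CF F' of N with F ⊆ F'. -/
/-- A point-to-point network: a finite directed multigraph with edge set
`edges`, endpoint maps `tail`/`head`, source `s` and sink `t`; every edge has
unit capacity. -/
structure Network (V : Type) (ε : Type) where
  edges : Finset ε
  tail : ε → V
  head : ε → V
  s : V
  t : V

namespace Network

variable {V ε : Type} [DecidableEq ε]

/-- `p` is a nonempty directed walk from `u` to `v` using edges of `N`. -/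
def IsWalk (N : Network V ε) (u v : V) (p : List ε) : Prop :=
  p ≠ [] ∧ (∀ e ∈ p, e ∈ N.edges) ∧
  (∀ i, ∀ h : i + 1 < p.length,
    N.head (p.get ⟨i, Nat.lt_of_succ_lt h⟩) = N.tail (p.get ⟨i + 1, h⟩)) ∧
  (∀ h : 0 < p.length, N.tail (p.get ⟨0, h⟩) = u) ∧
  (∀ h : 0 < p.length, N.head (p.get ⟨p.length - 1, Nat.sub_lt h Nat.one_pos⟩) = v)

/-- An `s`-`t` path: an edge-simple walk from the source to the sink. -/
def IsPath (N : Network V ε) (p : List ε) : Prop :=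
  N.IsWalk N.s N.t p ∧ p.Nodup

/-- `v` is reachable from `u` by a directed walk (or `u = v`). -/
def Reach (N : Network V ε) (u v : V) : Prop :=
  u = v ∨ ∃ p, N.IsWalk u v p

/-- Reachability within the subgraph induced by the vertex set `S`. -/
def ReachIn (N : Network V ε) (S : Set V) (u v : V) : Prop :=
  u = v ∨ ∃ p, N.IsWalk u v p ∧ ∀ e ∈ p, N.tail e ∈ S ∧ N.head e ∈ S

/-- An edge-simple directed cycle. -/
def IsCycle (N : Network V ε) (p : List ε) : Prop :=
  ∃ u, N.IsWalk u u p ∧ p.Nodup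

def Acyclic (N : Network V ε) : Prop := ∀ p, ¬ N.IsCycle p

/-- A collection of pairwise edge-disjoint `s`-`t` paths (an integral flow in a
unit-capacity network). -/
def IsFlowList (N : Network V ε) (fs : List (List ε)) : Prop :=
  (∀ p ∈ fs, N.IsPath p) ∧ fs.Pairwise fun p q => ∀ e ∈ p, e ∉ q

def HasFlow (N : Network V ε) (n : ℕ) : Prop :=
  ∃ fs, N.IsFlowList fs ∧ fs.length = n

/-- The maximum-flow value `C_N(s,t)`: the maximum number of pairwise
edge-disjoint directed `s`-`t` paths. -/
noncomputable def maxFlow (N : Network V ε) : ℕ :=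
  sSup {n | N.HasFlow n}

/-- Delete the edges of `F` from the network. -/
def del (N : Network V ε) (F : Finset ε) : Network V ε :=
  { N with edges := N.edges \ F }

/-- `F` is a `k`-th order capacity factor of `N`:
`C_{N\F} ≤ C_N − k`, and `C_{N\F'} > C_N − k` for every proper `F' ⊊ F`. -/
def IsKCF (N : Network V ε) (k : ℕ) (F : Finset ε) : Prop :=
  F.Nonempty ∧ F ⊆ N.edges ∧ (N.del F).maxFlow + k ≤ N.maxFlow ∧
    ∀ F' ⊂ F, N.maxFlow < (N.del F').maxFlow + k

/-- `F` is a capacity factor of `N`: deleting `F` decreases the maximum flow,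
while deleting any proper subset does not. -/
def IsCF (N : Network V ε) (F : Finset ε) : Prop :=
  F.Nonempty ∧ F ⊆ N.edges ∧ (N.del F).maxFlow < N.maxFlow ∧
    ∀ F' ⊂ F, (N.del F').maxFlow = N.maxFlow

/-- The set of edges used by a flow given as a list of paths. -/
def usedEdges (fs : List (List ε)) : Finset ε := fs.flatten.toFinset

/-- Residual network w.r.t. a set of used (unit-capacity) edges: used edges
are reversed, unused edges keep their direction. -/
def residual (N : Network V ε) (used : Finset ε) : Network V ε :=
  { edges := N.edges,
    tail := fun e => if e ∈ used then N.head e else N.tail e,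
    head := fun e => if e ∈ used then N.tail e else N.head e,
    s := N.s, t := N.t }

/-- The same network with sink replaced by `v`. -/
def withSink (N : Network V ε) (v : V) : Network V ε := { N with t := v }

end Network

open Network

set_option linter.unusedSectionVars false

namespace Network

variable {V ε : Type} [DecidableEq ε] {M : Network V ε} {u v w : V} {p q : List ε} {e : ε}

inductive GWalk (M : Network V ε) : V → V → List ε → Prop
  | single {e : ε} (he : e ∈ M.edges) : GWalk M (M.tail e) (M.head e) [e]
  | cons {e : ε} {v : V} {p : List ε} (he : e ∈ M.edges) (h : GWalk M (M.head e) v p) :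
      GWalk M (M.tail e) v (e :: p)

lemma GWalk.mem_edges (h : GWalk M u v p) : ∀ e ∈ p, e ∈ M.edges := by
  induction h with
  | single he => simpa using he
  | cons he _ ih =>
    intro f hf
    rcases List.mem_cons.1 hf with rfl | hf
    · exact he
    · exact ih f hf

lemma GWalk.ne_nil (h : GWalk M u v p) : p ≠ [] := by
  cases h <;> simp

lemma GWalk.isWalk (h : GWalk M u v p) : M.IsWalk u v p := by
  induction h with
  | @single e he =>
    refine ⟨by simp, by simpa using he, ?_, ?_, ?_⟩
    · intro i hi; simp at hi
    · intro h; rfl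
    · intro h; rfl
  | @cons e v p he hw ih =>
    obtain ⟨hne, hmem, hadj, hs, ht⟩ := ih
    have hlen : 0 < p.length := List.length_pos_iff.2 hne
    refine ⟨by simp, ?_, ?_, ?_, ?_⟩
    · intro f hf; rcases List.mem_cons.1 hf with rfl | hf
      · exact he
      · exact hmem f hf
    · intro i hi
      match i with
      | 0 =>
        have : (e :: p).get ⟨1, hi⟩ = p.get ⟨0, by simpa using hi⟩ := rfl
        rw [this]
        simpa using (hs (by simpa using hi)).symm
      | Nat.succ j =>
        have h1 : j + 1 < p.length := by simpa using hi
        exact hadj j h1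
    · intro _; rfl
    · intro _
      have h3 : ((e :: p).length - 1) < (e :: p).length := Nat.sub_lt (by simp) Nat.one_pos
      have key : (e :: p).get ⟨(e :: p).length - 1, h3⟩
          = p.get ⟨p.length - 1, Nat.sub_lt hlen Nat.one_pos⟩ := by
        have hfin : (⟨(e :: p).length - 1, h3⟩ : Fin (e :: p).length)
            = ⟨(p.length - 1) + 1, by simp; omega⟩ := by
          apply Fin.ext; simp; omega
        rw [hfin]; rfl
      rw [key]; exact ht hlen

lemma IsWalk.gWalk : ∀ {u : V} {p : List ε}, M.IsWalk u v p → GWalk M u v p := by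
  intro u p
  induction p generalizing u with
  | nil => intro h; exact absurd rfl h.1
  | cons e q ih =>
    intro h
    obtain ⟨hne, hmem, hadj, hs, ht⟩ := h
    have he : e ∈ M.edges := hmem e (by simp)
    have hte : M.tail e = u := by simpa using hs (by simp)
    cases q with
    | nil =>
      have hv : M.head e = v := by simpa using ht (by simp)
      have := GWalk.single (M := M) he
      rwa [hte, hv] at this
    | cons f r =>
      have hq : M.IsWalk (M.head e) v (f :: r) := by
        refine ⟨by simp, fun x hx => hmem x (by simp [hx]), ?_, ?_, ?_⟩
        · intro i hi
          have h1 : (i+1) + 1 < (e :: f :: r).length := by simpa using Nat.succ_lt_succ hi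
          have := hadj (i+1) h1
          simpa using this
        · intro _
          have h0 : 0 + 1 < (e :: f :: r).length := by simp
          have := hadj 0 h0
          simpa using this.symm
        · intro _
          have h3 : (e :: f :: r).length - 1 = ((f :: r).length - 1) + 1 := by simp
          have hlt : ((f :: r).length - 1) + 1 < (e :: f :: r).length := by simp
          have := ht (by simp)
          have h4 : (e :: f :: r).get ⟨(e :: f :: r).length - 1, Nat.sub_lt (by simp) Nat.one_pos⟩
              = (f :: r).get ⟨(f :: r).length - 1, Nat.sub_lt (by simp) Nat.one_pos⟩ := by
            have : (e :: f :: r).get ⟨((f :: r).length - 1) + 1, hlt⟩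
                = (f :: r).get ⟨(f :: r).length - 1, Nat.sub_lt (by simp) Nat.one_pos⟩ := rfl
            rw [← this]
            congr 1
          rwa [h4] at this
      have hw := ih hq
      have := GWalk.cons he hw
      rwa [hte] at this

lemma gWalk_iff_isWalk : GWalk M u v p ↔ M.IsWalk u v p :=
  ⟨GWalk.isWalk, IsWalk.gWalk⟩

lemma GWalk.append (h1 : GWalk M u v p) (h2 : GWalk M v w q) : GWalk M u w (p ++ q) := by
  induction h1 with
  | single he => exact GWalk.cons he h2
  | cons he _ ih => exact GWalk.cons he (ih h2)

end Network

namespace Network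

variable {V ε : Type} [DecidableEq ε] {M M' : Network V ε} {u v w : V} {p q : List ε} {e : ε}
  {fs : List (List ε)} {n : ℕ}

lemma flowlist_length_le (h : M.IsFlowList fs) (T : Finset ε)
    (hpick : ∀ p ∈ fs, ∃ e ∈ p, e ∈ T) : fs.length ≤ T.card := by
  classical
  have hc : ∀ i : Fin fs.length, ∃ e, e ∈ fs.get i ∧ e ∈ T := by
    intro i
    obtain ⟨e, he, heT⟩ := hpick (fs.get i) (by simpa using List.get_mem fs i.1 i.isLt)
    exact ⟨e, he, heT⟩
  choose c hc1 hc2 using hc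
  have hinj : Set.InjOn c (Finset.univ : Finset (Fin fs.length)) := by
    intro i _ j _ hij
    by_contra hne
    have hpw := List.pairwise_iff_get.1 h.2
    rcases lt_trichotomy i j with hlt | heq | hgt
    · exact (hpw i j hlt (c i) (hc1 i)) (hij ▸ hc1 j)
    · exact hne heq
    · exact (hpw j i hgt (c j) (hc1 j)) (hij ▸ hc1 i)
  have := Finset.card_le_card_of_injOn c (fun i _ => hc2 i) hinj
  simpa using this

lemma IsFlowList.length_le_card (h : M.IsFlowList fs) : fs.length ≤ M.edges.card := by
  refine flowlist_length_le h M.edges (fun p hp => ?_)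
  have hpath := h.1 p hp
  obtain ⟨e, he⟩ := List.exists_mem_of_ne_nil p hpath.1.1
  exact ⟨e, he, hpath.1.2.1 e he⟩

lemma hasFlow_zero (M : Network V ε) : M.HasFlow 0 :=
  ⟨[], ⟨by simp, List.Pairwise.nil⟩, rfl⟩

lemma bddAbove_hasFlow (M : Network V ε) : BddAbove {n | M.HasFlow n} := by
  refine ⟨M.edges.card, fun n hn => ?_⟩
  obtain ⟨fs, hf, rfl⟩ := hn
  exact hf.length_le_card

lemma hasFlow_maxFlow (M : Network V ε) : M.HasFlow M.maxFlow := by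
  have h := Nat.sSup_mem (s := {n | M.HasFlow n}) ⟨0, M.hasFlow_zero⟩ M.bddAbove_hasFlow
  exact h

lemma HasFlow.le_maxFlow (h : M.HasFlow n) : n ≤ M.maxFlow :=
  le_csSup M.bddAbove_hasFlow h

lemma GWalk.transfer (h1 : M.tail = M'.tail) (h2 : M.head = M'.head)
    (hw : GWalk M u v p) (hmem : ∀ e ∈ p, e ∈ M'.edges) : GWalk M' u v p := by
  induction hw with
  | @single e he =>
    rw [show M.tail e = M'.tail e from congrFun h1 e, show M.head e = M'.head e from congrFun h2 e]
    exact GWalk.single (hmem e (by simp))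
  | @cons e v' p' he hw ih =>
    have ih' := ih (fun x hx => hmem x (by simp [hx]))
    rw [show M.head e = M'.head e from congrFun h2 e] at ih'
    rw [show M.tail e = M'.tail e from congrFun h1 e]
    exact GWalk.cons (hmem e (by simp)) ih'

lemma IsFlowList.transfer (h1 : M.tail = M'.tail) (h2 : M.head = M'.head)
    (h3 : M.s = M'.s) (h4 : M.t = M'.t)
    (h : M.IsFlowList fs) (hmem : ∀ p ∈ fs, ∀ e ∈ p, e ∈ M'.edges) : M'.IsFlowList fs := by
  refine ⟨fun p hp => ?_, h.2⟩
  have hpath := h.1 p hp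
  refine ⟨?_, hpath.2⟩
  have hw : GWalk M M.s M.t p := hpath.1.gWalk
  have := hw.transfer h1 h2 (hmem p hp)
  rw [h3, h4] at this
  exact this.isWalk

lemma maxFlow_le_transfer (h1 : M.tail = M'.tail) (h2 : M.head = M'.head)
    (h3 : M.s = M'.s) (h4 : M.t = M'.t) (hE : M.edges ⊆ M'.edges) :
    M.maxFlow ≤ M'.maxFlow := by
  obtain ⟨fs, hf, hlen⟩ := M.hasFlow_maxFlow
  have : M'.HasFlow M.maxFlow :=
    ⟨fs, hf.transfer h1 h2 h3 h4 (fun p hp e he => hE ((hf.1 p hp).1.2.1 e he)), hlen⟩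
  exact this.le_maxFlow

lemma maxFlow_del_mono {N : Network V ε} {F₁ F₂ : Finset ε} (h : F₁ ⊆ F₂) :
    (N.del F₂).maxFlow ≤ (N.del F₁).maxFlow :=
  maxFlow_le_transfer rfl rfl rfl rfl (Finset.sdiff_subset_sdiff (le_refl _) h)

lemma del_insert (N : Network V ε) (e : ε) (F : Finset ε) :
    N.del (insert e F) = (N.del F).del {e} := by
  simp only [del]
  congr 1
  ext x
  simp only [Finset.mem_sdiff, Finset.mem_insert, Finset.mem_singleton]
  tauto

lemma maxFlow_del_le_insert (N : Network V ε) (e : ε) (F : Finset ε) :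
    (N.del F).maxFlow ≤ (N.del (insert e F)).maxFlow + 1 := by
  classical
  obtain ⟨fs, hfs, hlen⟩ := (N.del F).hasFlow_maxFlow
  set P : List ε → Bool := fun p => decide (e ∈ p) with hP
  have hsplit : (fs.filter P).length + (fs.filter (fun p => !P p)).length = fs.length := by
    have := (List.filter_append_perm P fs).length_eq
    simpa using this
  have hone : (fs.filter P).length ≤ 1 := by
    have hpw : (fs.filter P).Pairwise (fun p q => ∀ x ∈ p, x ∉ q) := hfs.2.filter P
    match hfl : fs.filter P with
    | [] => simp
    | [a] => simp
    | a :: b :: t =>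
      exfalso
      rw [hfl] at hpw
      have hab : ∀ x ∈ a, x ∉ b := (List.pairwise_cons.1 hpw).1 b (by simp)
      have hea : e ∈ a := by
        have : a ∈ fs.filter P := by rw [hfl]; simp
        simpa [hP] using List.of_mem_filter this
      have heb : e ∈ b := by
        have : b ∈ fs.filter P := by rw [hfl]; simp
        simpa [hP] using List.of_mem_filter this
      exact hab e hea heb
  have hgs : (N.del (insert e F)).HasFlow (fs.filter (fun p => !P p)).length := by
    refine ⟨fs.filter (fun p => !P p), ?_, rfl⟩
    refine IsFlowList.transfer (M := N.del F) (M' := N.del (insert e F)) rfl rfl rfl rfl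
      ⟨fun p hp => hfs.1 p (List.mem_of_mem_filter hp), hfs.2.filter _⟩ ?_
    intro p hp x hx
    have hpfs : p ∈ fs := List.mem_of_mem_filter hp
    have hxe : x ∈ N.edges \ F := (hfs.1 p hpfs).1.2.1 x hx
    have hnp : e ∉ p := by
      have := List.of_mem_filter hp
      simpa [hP] using this
    have hxne : x ≠ e := fun h => hnp (h ▸ hx)
    simp only [del, Finset.mem_sdiff, Finset.mem_insert] at hxe ⊢
    tauto
  have := hgs.le_maxFlow
  omega

end Network

namespace Network

open scoped Classical

variable {V ε : Type} [DecidableEq ε] {M M' : Network V ε} {u v w : V} {p q L : List ε} {e : ε}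
  {fs : List (List ε)} {n : ℕ}

noncomputable def outZ (M : Network V ε) (l : List ε) (v : V) : ℤ :=
  (l.map fun e => if M.tail e = v then (1:ℤ) else 0).sum

noncomputable def inZ (M : Network V ε) (l : List ε) (v : V) : ℤ :=
  (l.map fun e => if M.head e = v then (1:ℤ) else 0).sum

noncomputable def bal (M : Network V ε) (l : List ε) (v : V) : ℤ := outZ M l v - inZ M l v

lemma bal_nil : bal M [] v = 0 := by simp [bal, outZ, inZ]

lemma bal_cons (e : ε) (l : List ε) :
    bal M (e :: l) v
      = ((if M.tail e = v then (1:ℤ) else 0) - (if M.head e = v then (1:ℤ) else 0))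
        + bal M l v := by
  simp [bal, outZ, inZ]; ring

lemma bal_append (l₁ l₂ : List ε) :
    bal M (l₁ ++ l₂) v = bal M l₁ v + bal M l₂ v := by
  simp [bal, outZ, inZ]; ring

lemma bal_perm {l₁ l₂ : List ε} (h : l₁.Perm l₂) (v : V) : bal M l₁ v = bal M l₂ v := by
  simp [bal, outZ, inZ, (h.map _).sum_eq]

lemma outZ_nonneg (l : List ε) : 0 ≤ outZ M l v := by
  refine List.sum_nonneg ?_
  intro x hx
  simp only [List.mem_map] at hx
  obtain ⟨e, _, rfl⟩ := hx
  split <;> norm_num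

lemma inZ_nonneg (l : List ε) : 0 ≤ inZ M l v := by
  refine List.sum_nonneg ?_
  intro x hx
  simp only [List.mem_map] at hx
  obtain ⟨e, _, rfl⟩ := hx
  split <;> norm_num

lemma exists_tail_of_pos : ∀ {l : List ε}, 0 < outZ M l u → ∃ e ∈ l, M.tail e = u := by
  intro l
  induction l with
  | nil => intro h; simp [outZ] at h
  | cons e l ih =>
    intro h
    by_cases he : M.tail e = u
    · exact ⟨e, by simp, he⟩
    · have : outZ M (e :: l) u = outZ M l u := by simp [outZ, he]
      rw [this] at h
      obtain ⟨f, hf, hf2⟩ := ih h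
      exact ⟨f, by simp [hf], hf2⟩

lemma GWalk.bal_eq (h : GWalk M u v p) (w : V) :
    bal M p w = (if w = u then (1:ℤ) else 0) - (if w = v then 1 else 0) := by
  have hsym : ∀ (a b : V), (a = b) = (b = a) := fun a b => propext ⟨Eq.symm, Eq.symm⟩
  induction h with
  | @single e he =>
    rw [show [e] = e :: ([] : List ε) from rfl, bal_cons, bal_nil, add_zero,
      hsym (M.tail e) w, hsym (M.head e) w]
  | @cons e v' p' he hw ih =>
    rw [bal_cons, ih, hsym (M.tail e) w, hsym (M.head e) w]
    ring

lemma bal_flatten {fs : List (List ε)} (hfs : ∀ p ∈ fs, GWalk M M.s M.t p) (v : V) :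
    bal M fs.flatten v
      = fs.length * ((if v = M.s then (1:ℤ) else 0) - (if v = M.t then 1 else 0)) := by
  induction fs with
  | nil => simp [bal_nil]
  | cons p fs ih =>
    rw [List.flatten_cons, bal_append, (hfs p (by simp)).bal_eq,
      ih (fun q hq => hfs q (by simp [hq])), List.length_cons]
    push_cast
    ring

lemma extract (M : Network V ε) : ∀ (m : ℕ) (L : List ε), L.length ≤ m →
    (∀ e ∈ L, e ∈ M.edges) → ∀ u, u ≠ M.t →
    1 ≤ bal M L u → (∀ v, v ≠ u → v ≠ M.t → 0 ≤ bal M L v) →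
    ∃ p q : List ε, GWalk M u M.t p ∧ (p ++ q).Perm L := by
  intro m
  induction m with
  | zero =>
    intro L hL _ u _ h1 _
    have : L = [] := List.length_eq_zero_iff.1 (Nat.le_zero.1 hL)
    subst this
    rw [bal_nil] at h1
    omega
  | succ m ih =>
    intro L hL hmem u hut h1 h0
    have hpos : 0 < outZ M L u := by
      have h2 := inZ_nonneg (M := M) (v := u) L
      have h3 : bal M L u = outZ M L u - inZ M L u := rfl
      omega
    obtain ⟨e, heL, hte⟩ := exists_tail_of_pos hpos
    set L₂ := L.erase e with hL₂
    have hperm : L.Perm (e :: L₂) := List.perm_cons_erase heL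
    have hbal2 : ∀ v, bal M L₂ v = bal M L v
        - ((if M.tail e = v then (1:ℤ) else 0) - (if M.head e = v then 1 else 0)) := by
      intro v
      have h4 := bal_perm (M := M) hperm v
      rw [bal_cons] at h4
      omega
    by_cases hht : M.head e = M.t
    · refine ⟨[e], L₂, ?_, hperm.symm⟩
      have hw := GWalk.single (M := M) (hmem e heL)
      rwa [hte, hht] at hw
    · have hL₂len : L₂.length ≤ m := by
        have h5 : L₂.length = L.length - 1 := List.length_erase_of_mem heL
        have h6 : 0 < L.length := List.length_pos_iff.2 (List.ne_nil_of_mem heL)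
        omega
      have hmem₂ : ∀ x ∈ L₂, x ∈ M.edges := fun x hx => hmem x (List.mem_of_mem_erase hx)
      have hb1 : 1 ≤ bal M L₂ (M.head e) := by
        rcases eq_or_ne (M.head e) u with heu | heu
        · rw [heu]
          have h5 := hbal2 u
          simp only [hte, heu, if_pos rfl, sub_self, sub_zero] at h5
          omega
        · have h5 := hbal2 (M.head e)
          rw [hte] at h5
          rw [if_neg (fun h : u = M.head e => heu h.symm), if_pos rfl] at h5
          have h6 := h0 (M.head e) heu hht
          omega
      have hb0 : ∀ v, v ≠ M.head e → v ≠ M.t → 0 ≤ bal M L₂ v := by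
        intro v hvw hvt
        have h5 := hbal2 v
        rw [hte] at h5
        rw [if_neg (fun h : M.head e = v => hvw h.symm)] at h5
        rcases eq_or_ne v u with rfl | hvu
        · rw [if_pos rfl] at h5
          omega
        · rw [if_neg (fun h : u = v => hvu h.symm)] at h5
          have h6 := h0 v hvu hvt
          omega
      obtain ⟨p', q', hw', hperm'⟩ := ih L₂ hL₂len hmem₂ (M.head e) hht hb1 hb0
      refine ⟨e :: p', q', ?_, ?_⟩
      · have hw := GWalk.cons (hmem e heL) hw'
        rwa [hte] at hw
      · have hcp : (e :: (p' ++ q')).Perm L := (hperm'.cons e).trans hperm.symm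
        exact hcp

lemma decompose (M : Network V ε) (hst : M.s ≠ M.t) : ∀ (c : ℕ) (L : List ε), L.Nodup →
    (∀ e ∈ L, e ∈ M.edges) →
    (∀ v, bal M L v = c * ((if v = M.s then (1:ℤ) else 0) - (if v = M.t then 1 else 0))) →
    ∃ fs, M.IsFlowList fs ∧ fs.length = c ∧ ∀ x ∈ fs.flatten, x ∈ L := by
  intro c
  induction c with
  | zero => intro L _ _ _; exact ⟨[], ⟨by simp, List.Pairwise.nil⟩, rfl, by simp⟩
  | succ c ih =>
    intro L hnd hmem hbal
    have h1 : 1 ≤ bal M L M.s := by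
      have := hbal M.s
      rw [if_pos rfl, if_neg hst] at this
      rw [this]
      push_cast
      omega
    have h0 : ∀ v, v ≠ M.s → v ≠ M.t → 0 ≤ bal M L v := by
      intro v hv1 hv2
      rw [hbal v, if_neg hv1, if_neg hv2]
      simp
    obtain ⟨p, q, hw, hpq⟩ := extract M L.length L le_rfl hmem M.s hst h1 h0
    have hndpq : (p ++ q).Nodup := (hpq.nodup_iff).2 hnd
    have hndp : p.Nodup := (List.nodup_append.1 hndpq).1
    have hndq : q.Nodup := (List.nodup_append.1 hndpq).2.1
    have hdisj : p.Disjoint q := fun a ha hb => (List.nodup_append.1 hndpq).2.2 a ha a hb rfl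
    have hbq : ∀ v, bal M q v
        = c * ((if v = M.s then (1:ℤ) else 0) - (if v = M.t then 1 else 0)) := by
      intro v
      have h2 := bal_perm (M := M) hpq v
      rw [bal_append, hw.bal_eq] at h2
      have h3 := hbal v
      set d := ((if v = M.s then (1:ℤ) else 0) - (if v = M.t then 1 else 0)) with hd
      have h4 : ((c:ℤ)+1) * d - d = c * d := by ring
      push_cast at h3
      linarith [h4]
    obtain ⟨fs', hfs', hlen', hsub'⟩ :=
      ih q hndq (fun x hx => hmem x (hpq.mem_iff.1 (by simp [hx]))) hbq
    refine ⟨p :: fs', ⟨?_, ?_⟩, by simp [hlen'], ?_⟩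
    · intro r hr
      rcases List.mem_cons.1 hr with rfl | hr
      · exact ⟨hw.isWalk, hndp⟩
      · exact hfs'.1 r hr
    · refine List.pairwise_cons.2 ⟨?_, hfs'.2⟩
      intro r hr x hxp hxr
      exact hdisj hxp (hsub' x (List.mem_flatten.2 ⟨r, hr, hxr⟩))
    · intro x hx
      rw [List.flatten_cons, List.mem_append] at hx
      rcases hx with hx | hx
      · exact hpq.mem_iff.1 (by simp [hx])
      · exact hpq.mem_iff.1 (by simp [hsub' x hx])

end Network

namespace Network

open scoped Classical

variable {V ε : Type} [DecidableEq ε] {M M' : Network V ε} {u v w : V} {p q L : List ε} {e : ε}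
  {fs : List (List ε)} {n : ℕ}

lemma bal_congr : ∀ {l : List ε}, (∀ e ∈ l, M.tail e = M'.tail e ∧ M.head e = M'.head e) →
    bal M l v = bal M' l v := by
  intro l
  induction l with
  | nil => intro _; simp [bal_nil]
  | cons e l ih =>
    intro h
    rw [bal_cons, bal_cons, (h e (by simp)).1, (h e (by simp)).2,
      ih (fun x hx => h x (by simp [hx]))]

lemma bal_swap : ∀ {l : List ε}, (∀ e ∈ l, M.tail e = M'.head e ∧ M.head e = M'.tail e) →
    bal M l v = - bal M' l v := by
  intro l
  induction l with
  | nil => simp [bal_nil]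
  | cons e l ih =>
    intro h
    rw [bal_cons, bal_cons, (h e (by simp)).1, (h e (by simp)).2,
      ih (fun x hx => h x (by simp [hx]))]
    ring

lemma GWalk.tail_walk (h : GWalk M u v p) : ∀ {e}, e ∈ p →
    M.head e = v ∨ ∃ q, GWalk M (M.head e) v q ∧ q.length < p.length := by
  induction h with
  | @single f hf =>
    intro e he
    simp only [List.mem_singleton] at he
    subst he
    exact Or.inl rfl
  | @cons f v' p' hf hw ih =>
    intro e he
    rcases List.mem_cons.1 he with rfl | he
    · exact Or.inr ⟨p', hw, by simp⟩
    · rcases ih he with h | ⟨q, hq, hlen⟩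
      · exact Or.inl h
      · refine Or.inr ⟨q, hq, ?_⟩
        simp only [List.length_cons]
        omega

lemma GWalk.shorten (h : GWalk M u v p) (hnd : ¬ p.Nodup) :
    ∃ q, GWalk M u v q ∧ q.length < p.length := by
  induction h with
  | single hf => exact absurd (by simp) hnd
  | @cons f v' p' hf hw ih =>
    by_cases hfp : f ∈ p'
    · rcases hw.tail_walk hfp with hv | ⟨q, hq, hlen⟩
      · refine ⟨[f], ?_, ?_⟩
        · have h2 := GWalk.single (M := M) hf
          rwa [hv] at h2
        · have h3 := List.length_pos_iff.2 hw.ne_nil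
          simp only [List.length_singleton, List.length_cons, List.length_nil]
          omega
      · exact ⟨f :: q, GWalk.cons hf hq, by simp only [List.length_cons]; omega⟩
    · have hnd' : ¬ p'.Nodup := fun h2 => hnd (by simp [List.nodup_cons, hfp, h2])
      obtain ⟨q, hq, hlen⟩ := ih hnd'
      exact ⟨f :: q, GWalk.cons hf hq, by simp only [List.length_cons]; omega⟩

lemma GWalk.exists_nodup : ∀ (n : ℕ) (p : List ε), p.length ≤ n → GWalk M u v p →
    ∃ q, GWalk M u v q ∧ q.Nodup := by
  intro n
  induction n with
  | zero =>
    intro p hp h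
    have h2 := List.length_pos_iff.2 h.ne_nil
    omega
  | succ n ih =>
    intro p hp h
    by_cases hnd : p.Nodup
    · exact ⟨p, h, hnd⟩
    · obtain ⟨q, hq, hlen⟩ := h.shorten hnd
      exact ih q (by omega) hq

lemma Acyclic.no_closed (hA : M.Acyclic) (h : GWalk M u u p) : False := by
  obtain ⟨q, hq, hnd⟩ := GWalk.exists_nodup p.length p le_rfl h
  exact hA q ⟨u, hq.isWalk, hnd⟩

lemma Acyclic.del {N : Network V ε} (hA : N.Acyclic) (F : Finset ε) : (N.del F).Acyclic := by
  intro p hp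
  obtain ⟨u, hw, hnd⟩ := hp
  refine hA p ⟨u, ?_, hnd⟩
  have hg : GWalk (N.del F) u u p := hw.gWalk
  have hmem : ∀ e ∈ p, e ∈ N.edges := fun e he => (Finset.mem_sdiff.1 (hg.mem_edges e he)).1
  exact (GWalk.transfer (M := N.del F) (M' := N) rfl rfl hg hmem).isWalk

theorem exists_drop_edge (M : Network V ε) (hA : M.Acyclic) (h1 : 1 ≤ M.maxFlow) :
    ∃ e ∈ M.edges, (M.del {e}).maxFlow + 1 ≤ M.maxFlow := by
  classical
  obtain ⟨fs, hfs, hlen⟩ := M.hasFlow_maxFlow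
  set n := M.maxFlow with hn
  have hpaths : ∀ p ∈ fs, GWalk M M.s M.t p := fun p hp => (hfs.1 p hp).1.gWalk
  have hfs0 : fs ≠ [] := by
    intro h
    rw [h] at hlen
    simp at hlen
    omega
  have hst : M.s ≠ M.t := by
    intro heq
    obtain ⟨p, hp⟩ := List.exists_mem_of_ne_nil fs hfs0
    exact hA.no_closed (heq ▸ hpaths p hp)
  set U : List ε := fs.flatten with hU
  have hUedges : ∀ e ∈ U, e ∈ M.edges := by
    intro e he
    rw [hU, List.mem_flatten] at he
    obtain ⟨p, hp, hep⟩ := he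
    exact (hpaths p hp).mem_edges e hep
  have hUnd : U.Nodup := by
    rw [hU, List.nodup_flatten]
    exact ⟨fun p hp => (hfs.1 p hp).2, hfs.2.imp (fun h => h)⟩
  set R := M.residual U.toFinset with hR
  have hRtail : ∀ e ∈ U, R.tail e = M.head e := by
    intro e he
    simp [hR, residual, he]
  have hRhead : ∀ e ∈ U, R.head e = M.tail e := by
    intro e he
    simp [hR, residual, he]
  have hRtail' : ∀ e, e ∉ U → R.tail e = M.tail e := by
    intro e he
    simp [hR, residual, he]
  have hRhead' : ∀ e, e ∉ U → R.head e = M.head e := by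
    intro e he
    simp [hR, residual, he]
  set S : Set V := {v | v = M.s ∨ ∃ p, GWalk R M.s v p} with hS
  have hsS : M.s ∈ S := Or.inl rfl
  have hclosed : ∀ e ∈ M.edges, R.tail e ∈ S → R.head e ∈ S := by
    intro e he htl
    rcases htl with heq | ⟨p, hp⟩
    · right
      refine ⟨[e], ?_⟩
      have h2 := GWalk.single (M := R) (show e ∈ R.edges from he)
      rwa [heq] at h2
    · right
      exact ⟨p ++ [e], hp.append (GWalk.single (show e ∈ R.edges from he))⟩
  -- no augmenting path: t ∉ S
  have hT : M.t ∉ S := by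
    intro htS
    rcases htS with heq | ⟨p₀', hp₀'⟩
    · exact hst heq.symm
    obtain ⟨p₀, hp₀, hnd₀⟩ := GWalk.exists_nodup p₀'.length p₀' le_rfl hp₀'
    have hp₀edges : ∀ e ∈ p₀, e ∈ M.edges := hp₀.mem_edges
    set A := p₀.filter (fun e => decide (e ∉ U)) with hA'
    set B := p₀.filter (fun e => decide (e ∈ U)) with hB'
    set B' := U.filter (fun e => decide (e ∈ p₀)) with hB''
    set L' := U.filter (fun e => decide (e ∉ p₀)) ++ A with hL'
    have hL'mem : ∀ e ∈ L', e ∈ M.edges := by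
      intro e he
      rw [hL', List.mem_append] at he
      rcases he with he | he
      · exact hUedges e (List.mem_of_mem_filter he)
      · rw [hA'] at he
        exact hp₀edges e (List.mem_of_mem_filter he)
    have hL'nd : L'.Nodup := by
      rw [hL']
      rw [hA']
      refine List.Nodup.append (hUnd.filter _) (hnd₀.filter _) ?_
      intro x hx1 hx2
      have h2 : x ∈ U := List.mem_of_mem_filter hx1
      have h3 : x ∉ U := by
        simpa using List.of_mem_filter hx2
      exact h3 h2
    -- permutations
    have hperm1 : (U.filter (fun e => decide (e ∉ p₀)) ++ B').Perm U := by
      have h3 : ∀ x ∈ U, (decide (x ∈ p₀)) = (!decide (x ∉ p₀)) := fun x _ => by simp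
      have h4 : B' = U.filter (fun x => !decide (x ∉ p₀)) := by
        rw [hB'']
        exact List.filter_congr h3
      rw [h4]
      exact List.filter_append_perm _ U
    have hperm2 : (A ++ B).Perm p₀ := by
      have h3 : ∀ x ∈ p₀, (decide (x ∈ U)) = (!decide (x ∉ U)) := fun x _ => by simp
      have h4 : B = p₀.filter (fun x => !decide (x ∉ U)) := by
        rw [hB']
        exact List.filter_congr h3
      rw [hA', h4]
      exact List.filter_append_perm _ p₀
    have hpermB : B'.Perm B := by
      rw [hB'', hB']
      rw [List.perm_ext_iff_of_nodup (hUnd.filter _) (hnd₀.filter _)]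
      intro a
      simp only [List.mem_filter, decide_eq_true_eq]
      tauto
    -- balance
    have hbalU : ∀ v, bal M U v
        = n * ((if v = M.s then (1:ℤ) else 0) - (if v = M.t then 1 else 0)) := by
      intro v
      rw [hU, bal_flatten hpaths v, hlen]
    have hbalp₀ : ∀ v, bal R p₀ v
        = ((if v = M.s then (1:ℤ) else 0) - (if v = M.t then 1 else 0)) := by
      intro v
      have h2 := hp₀.bal_eq v
      simpa [hR, residual] using h2
    have hbalA : ∀ v, bal R A v = bal M A v := by
      intro v
      refine bal_congr ?_
      intro e he
      have h2 : e ∉ U := by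
        rw [hA'] at he
        simpa using List.of_mem_filter he
      exact ⟨hRtail' e h2, hRhead' e h2⟩
    have hbalB : ∀ v, bal R B v = - bal M B v := by
      intro v
      refine bal_swap ?_
      intro e he
      have h2 : e ∈ U := by
        rw [hB'] at he
        simpa using List.of_mem_filter he
      exact ⟨hRtail e h2, hRhead e h2⟩
    have hbalL' : ∀ v, bal M L' v
        = (n+1) * ((if v = M.s then (1:ℤ) else 0) - (if v = M.t then 1 else 0)) := by
      intro v
      have e1 : bal M L' v = bal M (U.filter (fun e => decide (e ∉ p₀))) v + bal M A v := by
        rw [hL', bal_append]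
      have e2 : bal M (U.filter (fun e => decide (e ∉ p₀))) v + bal M B' v = bal M U v := by
        rw [← bal_append]
        exact bal_perm hperm1 v
      have e3 : bal M B' v = bal M B v := bal_perm hpermB v
      have e4 : bal R A v + bal R B v = bal R p₀ v := by
        rw [← bal_append]
        exact bal_perm hperm2 v
      have e5 := hbalA v
      have e6 := hbalB v
      have e7 := hbalp₀ v
      have e8 := hbalU v
      push_cast
      push_cast at e8
      linarith
    obtain ⟨gs, hgs, hgslen, _⟩ := M.decompose hst (n+1) L' hL'nd hL'mem hbalL'
    have h9 : M.HasFlow (n+1) := ⟨gs, hgs, hgslen⟩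
    have h10 := h9.le_maxFlow
    omega
  -- the cut
  set Cr : Finset ε := M.edges.filter (fun e => M.tail e ∈ S ∧ M.head e ∉ S) with hCr
  have hCrU : ∀ e ∈ Cr, e ∈ U := by
    intro e he
    rw [hCr, Finset.mem_filter] at he
    by_contra heU
    have h2 := hclosed e he.1 (by rw [hRtail' e heU]; exact he.2.1)
    rw [hRhead' e heU] at h2
    exact he.2.2 h2
  have hback : ∀ e ∈ U, M.head e ∈ S → M.tail e ∈ S := by
    intro e heU hh
    have h2 := hclosed e (hUedges e heU) (by rw [hRtail e heU]; exact hh)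
    rwa [hRhead e heU] at h2
  have hcross : ∀ {u v : V} {pp : List ε}, GWalk M u v pp → u ∈ S → v ∉ S →
      ∃ e ∈ pp, M.tail e ∈ S ∧ M.head e ∉ S := by
    intro u v pp h
    induction h with
    | @single e he =>
      intro hu hv
      exact ⟨e, by simp, hu, hv⟩
    | @cons e v' pp' he hw ih =>
      intro hu hv
      by_cases hh : M.head e ∈ S
      · obtain ⟨f, hf, hf2⟩ := ih hh hv
        exact ⟨f, by simp [hf], hf2⟩
      · exact ⟨e, by simp, hu, hh⟩
  have hstay : ∀ {u v : V} {pp : List ε}, GWalk M u v pp → (∀ e ∈ pp, e ∈ U) → u ∉ S →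
      ∀ e ∈ pp, M.tail e ∉ S := by
    intro u v pp h
    induction h with
    | @single e he =>
      intro _ hu f hf
      simp only [List.mem_singleton] at hf
      subst hf
      exact hu
    | @cons e v' pp' he hw ih =>
      intro hUm hu f hf
      have hhe : M.head e ∉ S := fun hh => hu (hback e (hUm e (by simp)) hh)
      rcases List.mem_cons.1 hf with rfl | hf
      · exact hu
      · exact ih (fun x hx => hUm x (by simp [hx])) hhe f hf
  have hatmost : ∀ {u v : V} {pp : List ε}, GWalk M u v pp → (∀ e ∈ pp, e ∈ U) →
      (pp.filter (fun e => decide (M.tail e ∈ S ∧ M.head e ∉ S))).length ≤ 1 := by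
    intro u v pp h
    induction h with
    | @single e he =>
      intro _
      simpa using List.length_filter_le _ [e]
    | @cons e v' pp' he hw ih =>
      intro hUm
      by_cases hcr : M.tail e ∈ S ∧ M.head e ∉ S
      · have h2 : ∀ f ∈ pp', M.tail f ∉ S := hstay hw (fun x hx => hUm x (by simp [hx])) hcr.2
        have h3 : pp'.filter (fun e => decide (M.tail e ∈ S ∧ M.head e ∉ S)) = [] := by
          rw [List.filter_eq_nil_iff]
          intro f hf
          simp only [decide_eq_true_eq]
          intro h4
          exact h2 f hf h4.1
        rw [List.filter_cons_of_pos (by simp [hcr]), h3]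
        simp
      · rw [List.filter_cons_of_neg (by simp [hcr])]
        exact ih (fun x hx => hUm x (by simp [hx]))
  have hCrcard : Cr.card ≤ n := by
    have hUf : Cr = (U.filter (fun e => decide (M.tail e ∈ S ∧ M.head e ∉ S))).toFinset := by
      ext x
      simp only [List.mem_toFinset, List.mem_filter, decide_eq_true_eq]
      constructor
      · intro hx
        refine ⟨hCrU x hx, ?_⟩
        rw [hCr, Finset.mem_filter] at hx
        exact hx.2
      · intro hx
        rw [hCr, Finset.mem_filter]
        exact ⟨hUedges x hx.1, hx.2⟩
    rw [hUf, List.toFinset_card_of_nodup (hUnd.filter _)]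
    rw [hU, List.filter_flatten]
    rw [List.length_flatten]
    have h5 : ∀ x ∈ (fs.map (List.filter (fun e => decide (M.tail e ∈ S ∧ M.head e ∉ S)))).map
        List.length, x ≤ 1 := by
      intro x hx
      simp only [List.map_map, List.mem_map, Function.comp] at hx
      obtain ⟨pp, hpp, rfl⟩ := hx
      exact hatmost (hpaths pp hpp) (fun e he => by rw [hU, List.mem_flatten]; exact ⟨pp, hpp, he⟩)
    have h6 := List.sum_le_card_nsmul _ 1 h5
    simp only [List.length_map, smul_eq_mul, mul_one] at h6
    omega
  -- pick a cut edge
  obtain ⟨p1, hp1⟩ := List.exists_mem_of_ne_nil fs hfs0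
  obtain ⟨e₀, he₀p, he₀cr⟩ := hcross (hpaths p1 hp1) hsS hT
  have he₀ : e₀ ∈ M.edges := (hpaths p1 hp1).mem_edges e₀ he₀p
  have he₀Cr : e₀ ∈ Cr := by
    rw [hCr, Finset.mem_filter]
    exact ⟨he₀, he₀cr⟩
  refine ⟨e₀, he₀, ?_⟩
  obtain ⟨gs, hgs, hgslen⟩ := (M.del {e₀}).hasFlow_maxFlow
  have hcount : gs.length ≤ (Cr.erase e₀).card := by
    refine flowlist_length_le hgs (Cr.erase e₀) ?_
    intro pp hpp
    have hw : GWalk (M.del {e₀}) M.s M.t pp := (hgs.1 pp hpp).1.gWalk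
    have hmemd : ∀ x ∈ pp, x ∈ (M.del {e₀}).edges := hw.mem_edges
    have hwM : GWalk M M.s M.t pp :=
      GWalk.transfer (M := M.del {e₀}) (M' := M) rfl rfl hw
        (fun x hx => (Finset.mem_sdiff.1 (hmemd x hx)).1)
    obtain ⟨f, hf, hfcr⟩ := hcross hwM hsS hT
    have hfe : f ∈ M.edges := hwM.mem_edges f hf
    have hfne : f ≠ e₀ := by
      intro h
      have h2 := (Finset.mem_sdiff.1 (hmemd f hf)).2
      exact h2 (by simp [h])
    refine ⟨f, hf, Finset.mem_erase.2 ⟨hfne, ?_⟩⟩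
    rw [hCr, Finset.mem_filter]
    exact ⟨hfe, hfcr⟩
  have hec := Finset.card_erase_of_mem he₀Cr
  have hCrpos : 0 < Cr.card := Finset.card_pos.2 ⟨e₀, he₀Cr⟩
  omega

end Network

/-- In an acyclic network, every `k`-CF with `k < C_N(s,t)` is contained in
some `(k+1)`-CF. -/
theorem kCF_subset_succ_kCF {V ε : Type} [DecidableEq ε]
    (N : Network V ε) (hA : N.Acyclic) (k : ℕ) (F : Finset ε)
    (hF : N.IsKCF k F) (hk : k < N.maxFlow) :
    ∃ F', N.IsKCF (k + 1) F' ∧ F ⊆ F' := by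
  classical
  obtain ⟨hne, hsub, hle, hlt⟩ := hF
  obtain ⟨f₀, hf₀⟩ := hne
  have hproper : F.erase f₀ ⊂ F := Finset.erase_ssubset hf₀
  have h2 := hlt _ hproper
  have h3 : (N.del (F.erase f₀)).maxFlow ≤ (N.del F).maxFlow + 1 := by
    have h := maxFlow_del_le_insert N f₀ (F.erase f₀)
    rwa [Finset.insert_erase hf₀] at h
  have heq : (N.del F).maxFlow + k = N.maxFlow := by omega
  have hM1 : 1 ≤ (N.del F).maxFlow := by omega
  obtain ⟨e, heE, hdrop⟩ := exists_drop_edge (N.del F) (hA.del F) hM1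
  have heN : e ∈ N.edges := (Finset.mem_sdiff.1 heE).1
  have heF : e ∉ F := (Finset.mem_sdiff.1 heE).2
  refine ⟨insert e F, ⟨⟨e, Finset.mem_insert_self e F⟩, ?_, ?_, ?_⟩, Finset.subset_insert e F⟩
  · intro x hx
    rcases Finset.mem_insert.1 hx with rfl | hx
    · exact heN
    · exact hsub hx
  · rw [del_insert]
    omega
  · intro F'' hss
    by_cases heF'' : e ∈ F''
    · have hF₀F : F''.erase e ⊆ F := by
        intro x hx
        obtain ⟨hxne, hxF''⟩ := Finset.mem_erase.1 hx
        rcases Finset.mem_insert.1 (hss.subset hxF'') with rfl | h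
        · exact absurd rfl hxne
        · exact h
      have hF₀ne : F''.erase e ≠ F := by
        intro h
        have hsup : insert e F ⊆ F'' := by
          intro x hx
          rcases Finset.mem_insert.1 hx with rfl | hx
          · exact heF''
          · rw [← h] at hx
            exact Finset.erase_subset e F'' hx
        exact hss.ne (Finset.Subset.antisymm hss.subset hsup)
      have h4 := hlt _ (ssubset_of_subset_of_ne hF₀F hF₀ne)
      have h5 : (N.del (F''.erase e)).maxFlow ≤ (N.del F'').maxFlow + 1 := by
        have h := maxFlow_del_le_insert N e (F''.erase e)
        rwa [Finset.insert_erase heF''] at h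
      omega
    · have hsubF : F'' ⊆ F := by
        intro x hx
        rcases Finset.mem_insert.1 (hss.subset hx) with rfl | h
        · exact absurd hx heF''
        · exact h
      rcases eq_or_ne F'' F with rfl | hne'
      · omega
      · have h4 := hlt F'' (ssubset_of_subset_of_ne hsubF hne')
        omega
end

section
/- Let N=(V,E,s,t) be a unit-capacity point-to-point network and F a k-CF of N. For any positive integers k_1,…,k_n with k_1+⋯+k_n = k, there exist pairwise disjoint sets F_1,…,F_n ⊆ F whose union is F such that for each i, F_i is a k_i-CF of the network N with F_1 ∪ ⋯ ∪ F_{i−1} deleted. -/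
namespace Network

variable {V ε : Type} [DecidableEq ε]

variable {N M : Network V ε}

lemma del_del (N : Network V ε) (A B : Finset ε) : (N.del A).del B = N.del (A ∪ B) := by
  simp only [del]
  congr 1
  ext e
  simp only [Finset.mem_sdiff, Finset.mem_union]
  tauto

lemma del_empty (N : Network V ε) : N.del ∅ = N := by
  cases N; simp [del]

lemma IsWalk.mono (he : N.edges ⊆ M.edges) (ht : N.tail = M.tail) (hh : N.head = M.head)
    {u v p} (h : N.IsWalk u v p) : M.IsWalk u v p := by
  obtain ⟨h1, h2, h3, h4, h5⟩ := h
  refine ⟨h1, fun e hm => he (h2 e hm), fun i h => ?_, fun h => ?_, fun h => ?_⟩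
  · rw [← ht, ← hh]; exact h3 i h
  · rw [← ht]; exact h4 h
  · rw [← hh]; exact h5 h

lemma HasFlow.mono (he : N.edges ⊆ M.edges) (ht : N.tail = M.tail) (hh : N.head = M.head)
    (hs : N.s = M.s) (htt : N.t = M.t) {n} (h : N.HasFlow n) : M.HasFlow n := by
  obtain ⟨fs, ⟨hp, hpw⟩, hl⟩ := h
  refine ⟨fs, ⟨fun p hm => ⟨?_, (hp p hm).2⟩, hpw⟩, hl⟩
  have := (hp p hm).1
  rw [← hs, ← htt]
  exact this.mono he ht hh

lemma flowList_length_le {fs} (h : N.IsFlowList fs) : fs.length ≤ N.edges.card := by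
  obtain ⟨hp, hpw⟩ := h
  have hnd : fs.flatten.Nodup := by
    rw [List.nodup_flatten]
    exact ⟨fun l hl => (hp l hl).2, hpw.imp (fun h => h)⟩
  have h1 : fs.length ≤ fs.flatten.length := by
    clear hpw hnd
    induction fs with
    | nil => simp
    | cons p rest ih =>
      simp only [List.flatten_cons, List.length_append, List.length_cons]
      have hne : p ≠ [] := (hp p (by simp)).1.1
      have : 1 ≤ p.length := List.length_pos_iff.mpr hne
      have := ih (fun q hq => hp q (by simp [hq]))
      omega
  have h2 : fs.flatten.length ≤ N.edges.card := by
    rw [← List.toFinset_card_of_nodup hnd]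
    apply Finset.card_le_card
    intro e he
    rw [List.mem_toFinset, List.mem_flatten] at he
    obtain ⟨l, hl, hel⟩ := he
    exact (hp l hl).1.2.1 e hel
  omega

lemma hasFlow_zero_s7 (N : Network V ε) : N.HasFlow 0 := ⟨[], ⟨by simp, by simp⟩, rfl⟩

lemma maxFlow_hasFlow (N : Network V ε) : N.HasFlow N.maxFlow := by
  have : N.maxFlow ∈ {n | N.HasFlow n} := by
    apply Nat.sSup_mem ⟨0, by exact N.hasFlow_zero_s7⟩
    exact ⟨N.edges.card, fun n ⟨fs, hfs, hl⟩ => hl ▸ flowList_length_le hfs⟩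
  exact this

lemma HasFlow.le_maxFlow_s7 {n} (h : N.HasFlow n) : n ≤ N.maxFlow :=
  le_csSup ⟨N.edges.card, fun n ⟨fs, hfs, hl⟩ => hl ▸ flowList_length_le hfs⟩ h

lemma maxFlow_del_mono_s7 {A B : Finset ε} (h : B ⊆ A) :
    (N.del A).maxFlow ≤ (N.del B).maxFlow := by
  refine HasFlow.le_maxFlow_s7 (HasFlow.mono ?_ ?_ ?_ ?_ ?_ (maxFlow_hasFlow (N.del A))) <;>
    first
    | exact Finset.sdiff_subset_sdiff (le_refl _) h
    | rfl

lemma maxFlow_le_del_singleton (N : Network V ε) (e : ε) :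
    N.maxFlow ≤ (N.del {e}).maxFlow + 1 := by
  obtain ⟨fs, ⟨hp, hpw⟩, hl⟩ := N.maxFlow_hasFlow
  set fs' := fs.filter (fun p => decide (e ∉ p)) with hfs'
  have hsub : List.Sublist fs' fs := List.filter_sublist
  have hflow : (N.del {e}).HasFlow fs'.length := by
    refine ⟨fs', ⟨fun p hm => ?_, hpw.sublist hsub⟩, rfl⟩
    have hmem := hsub.subset hm
    have hne : e ∉ p := by
      have := List.of_mem_filter hm
      simpa using this
    obtain ⟨⟨w1, w2, w3, w4, w5⟩, hnd⟩ := hp p hmem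
    exact ⟨⟨w1, fun x hx => by
      simp only [del, Finset.mem_sdiff, Finset.mem_singleton]
      exact ⟨w2 x hx, fun hxe => hne (hxe ▸ hx)⟩, w3, w4, w5⟩, hnd⟩
  have hcount : (fs.filter (fun p => decide (e ∈ p))).length ≤ 1 := by
    clear hl hflow hfs' hsub
    induction fs with
    | nil => simp
    | cons p rest ih =>
      rw [List.pairwise_cons] at hpw
      by_cases hep : e ∈ p
      · have : rest.filter (fun q => decide (e ∈ q)) = [] := by
          rw [List.filter_eq_nil_iff]
          intro q hq hqe
          exact absurd hep (by simpa using fun h => (hpw.1 q hq e h) (by simpa using hqe))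
        simp [List.filter_cons, hep, this]
      · simp only [List.filter_cons, hep]
        exact ih (fun q hq => hp q (by simp [hq])) hpw.2
  have hsplit := List.length_eq_length_filter_add (l := fs) (fun p => decide (e ∈ p))
  have : fs.filter (fun p => !decide (e ∈ p)) = fs' := by
    simp [hfs']
  rw [this] at hsplit
  have := hflow.le_maxFlow_s7
  omega

lemma exists_split (N : Network V ε) (F : Finset ε) (a b : ℕ) (ha : 0 < a) (hb : 0 < b)
    (hF : N.IsKCF (a + b) F) :
    ∃ F₁, F₁ ⊆ F ∧ N.IsKCF a F₁ ∧ (N.del F₁).IsKCF b (F \ F₁) := by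
  classical
  obtain ⟨hFne, hFsub, hFdrop, hFmin⟩ := hF
  set S := F.powerset.filter (fun F' => (N.del F').maxFlow + a ≤ N.maxFlow) with hS
  have hFS : F ∈ S := by
    simp only [hS, Finset.mem_filter, Finset.mem_powerset]
    exact ⟨Finset.Subset.refl F, by omega⟩
  obtain ⟨F₁, hF₁S, hmin⟩ := S.exists_min_image Finset.card ⟨F, hFS⟩
  simp only [hS, Finset.mem_filter, Finset.mem_powerset] at hF₁S
  obtain ⟨hF₁F, hF₁drop⟩ := hF₁S
  have hminimal : ∀ F' ⊂ F₁, N.maxFlow < (N.del F').maxFlow + a := by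
    intro F' hss
    by_contra hcon
    push_neg at hcon
    have hmem : F' ∈ S := by
      simp only [hS, Finset.mem_filter, Finset.mem_powerset]
      exact ⟨hss.subset.trans hF₁F, hcon⟩
    have h1 := hmin F' hmem
    have h2 := Finset.card_lt_card hss
    omega
  have hF₁ne : F₁.Nonempty := by
    rcases F₁.eq_empty_or_nonempty with h | h
    · subst h
      rw [del_empty] at hF₁drop
      omega
    · exact h
  have heq : (N.del F₁).maxFlow + a = N.maxFlow := by
    obtain ⟨e, he⟩ := hF₁ne
    have h1 := hminimal (F₁.erase e) (Finset.erase_ssubset he)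
    have h2 : (N.del (F₁.erase e)).maxFlow ≤ (N.del F₁).maxFlow + 1 := by
      have h3 := maxFlow_le_del_singleton (N.del (F₁.erase e)) e
      rwa [del_del, Finset.union_comm, ← Finset.insert_eq, Finset.insert_erase he] at h3
    omega
  have hKCF₁ : N.IsKCF a F₁ := ⟨hF₁ne, hF₁F.trans hFsub, by omega, hminimal⟩
  have hF₁neF : F₁ ≠ F := by
    intro h; subst h; omega
  have hFdiff : (F \ F₁).Nonempty := by
    rw [Finset.sdiff_nonempty]
    intro h; exact hF₁neF (Finset.Subset.antisymm hF₁F h)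
  refine ⟨F₁, hF₁F, hKCF₁, hFdiff, ?_, ?_, ?_⟩
  · intro e he'
    rw [Finset.mem_sdiff] at he'
    simp only [del, Finset.mem_sdiff]
    exact ⟨hFsub he'.1, he'.2⟩
  · rw [del_del, Finset.union_sdiff_of_subset hF₁F]
    omega
  · intro F' hss
    have hssF : F₁ ∪ F' ⊂ F := by
      obtain ⟨x, hxF, hxF'⟩ := Finset.exists_of_ssubset hss
      rw [Finset.mem_sdiff] at hxF
      refine (Finset.ssubset_iff_of_subset ?_).mpr ⟨x, hxF.1, ?_⟩
      · exact Finset.union_subset hF₁F (hss.subset.trans Finset.sdiff_subset)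
      · simp only [Finset.mem_union]
        rintro (h | h)
        exacts [hxF.2 h, hxF' h]
    have h4 := hFmin (F₁ ∪ F') hssF
    rw [del_del]
    omega

lemma biUnion_univ_succ {n : ℕ} (Fs : Fin (n + 1) → Finset ε) :
    Finset.univ.biUnion Fs = Fs 0 ∪ Finset.univ.biUnion (fun j : Fin n => Fs j.succ) := by
  ext e
  simp only [Finset.mem_biUnion, Finset.mem_union, Finset.mem_univ, true_and]
  constructor
  · rintro ⟨i, hi⟩
    induction i using Fin.cases with
    | zero => exact Or.inl hi
    | succ j => exact Or.inr ⟨j, hi⟩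
  · rintro (h | ⟨j, hj⟩)
    exacts [⟨0, h⟩, ⟨j.succ, hj⟩]

lemma prefix_succ {n : ℕ} (Fs : Fin (n + 1) → Finset ε) (m : Fin n) :
    (Finset.univ.filter fun j => j < Fin.succ m).biUnion Fs
      = Fs 0 ∪ (Finset.univ.filter fun j => j < m).biUnion (fun j : Fin n => Fs j.succ) := by
  ext e
  simp only [Finset.mem_biUnion, Finset.mem_union, Finset.mem_filter, Finset.mem_univ, true_and]
  constructor
  · rintro ⟨i, hlt, hi⟩
    induction i using Fin.cases with
    | zero => exact Or.inl hi
    | succ j => exact Or.inr ⟨j, by simpa [Fin.succ_lt_succ_iff] using hlt, hi⟩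
  · rintro (h | ⟨j, hlt, hj⟩)
    · exact ⟨0, Fin.succ_pos m, h⟩
    · exact ⟨j.succ, Fin.succ_lt_succ_iff.mpr hlt, hj⟩

lemma decompose_s7 (n : ℕ) : ∀ (N : Network V ε) (k : ℕ) (F : Finset ε), N.IsKCF k F →
    ∀ ks : Fin (n + 1) → ℕ, (∀ i, 0 < ks i) → ∑ i, ks i = k →
    ∃ Fs : Fin (n + 1) → Finset ε,
      (∀ i, Fs i ⊆ F) ∧
      (∀ i j, i ≠ j → Disjoint (Fs i) (Fs j)) ∧
      Finset.univ.biUnion Fs = F ∧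
      ∀ i, (N.del ((Finset.univ.filter fun j => j < i).biUnion Fs)).IsKCF
        (ks i) (Fs i) := by
  induction n with
  | zero =>
    intro N k F hF ks hpos hsum
    refine ⟨fun _ => F, fun _ => Finset.Subset.refl F, fun i j hij => absurd ((Fin.fin_one_eq_zero i).trans (Fin.fin_one_eq_zero j).symm) hij, ?_, ?_⟩
    · ext e; simp
    · intro i
      have hi0 : i = 0 := Fin.fin_one_eq_zero i
      subst hi0
      have hempty : (Finset.univ.filter fun j : Fin 1 => j < 0) = ∅ :=
        Finset.filter_eq_empty_iff.mpr (fun j _ => Fin.not_lt_zero j)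
      rw [hempty, Finset.biUnion_empty, del_empty]
      have : ks 0 = k := by rw [← hsum]; simp
      rw [this]
      exact hF
  | succ m ih =>
    intro N k F hF ks hpos hsum
    set a := ks 0 with ha'
    set b := ∑ i : Fin (m + 1), ks i.succ with hb'
    have hab : a + b = k := by rw [ha', hb', ← hsum]; exact (Fin.sum_univ_succ ks).symm
    obtain ⟨F₁, hF₁F, hKCF₁, hrest⟩ :=
      exists_split N F a b (hpos 0) (Finset.sum_pos (fun i _ => hpos i.succ) Finset.univ_nonempty) (hab ▸ hF)
    obtain ⟨Fs', hsub', hdisj', hunion', hkcf'⟩ :=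
      ih (N.del F₁) b (F \ F₁) hrest (fun i => ks i.succ) (fun i => hpos i.succ) rfl
    refine ⟨Fin.cases F₁ Fs', ?_, ?_, ?_, ?_⟩
    · intro i
      induction i using Fin.cases with
      | zero => exact hF₁F
      | succ j => exact (hsub' j).trans Finset.sdiff_subset
    · intro i j hij
      induction i using Fin.cases with
      | zero =>
        induction j using Fin.cases with
        | zero => exact absurd rfl hij
        | succ j' =>
          exact (Finset.disjoint_sdiff.mono_right (hsub' j'))
      | succ i' =>
        induction j using Fin.cases with
        | zero => exact (Finset.disjoint_sdiff.mono_right (hsub' i')).symm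
        | succ j' => exact hdisj' i' j' (fun h => hij (by rw [h]))
    · rw [biUnion_univ_succ]
      simp only [Fin.cases_zero, Fin.cases_succ]
      rw [hunion', Finset.union_sdiff_of_subset hF₁F]
    · intro i
      induction i using Fin.cases with
      | zero =>
        have hempty : (Finset.univ.filter fun j : Fin (m + 2) => j < 0) = ∅ :=
          Finset.filter_eq_empty_iff.mpr (fun j _ => Fin.not_lt_zero j)
        rw [hempty, Finset.biUnion_empty, del_empty]
        simpa using hKCF₁
      | succ j =>
        rw [prefix_succ]
        simp only [Fin.cases_zero, Fin.cases_succ]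
        rw [← del_del]
        simpa using hkcf' j
end Network

open Network

/-- A `k`-CF can be decomposed along any composition `k = k₁ + ⋯ + kₙ` into
pairwise disjoint pieces, the `i`-th being a `kᵢ`-CF of the network with the
previous pieces deleted. -/
theorem kCF_decompose_general {V ε : Type} [DecidableEq ε]
    (N : Network V ε) (k : ℕ) (F : Finset ε) (hF : N.IsKCF k F)
    (n : ℕ) (hn : 0 < n) (ks : Fin n → ℕ)
    (hpos : ∀ i, 0 < ks i) (hsum : ∑ i, ks i = k) :
    ∃ Fs : Fin n → Finset ε,
      (∀ i, Fs i ⊆ F) ∧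
      (∀ i j, i ≠ j → Disjoint (Fs i) (Fs j)) ∧
      Finset.univ.biUnion Fs = F ∧
      ∀ i, (N.del ((Finset.univ.filter fun j => j < i).biUnion Fs)).IsKCF
        (ks i) (Fs i) := by
  obtain ⟨m, rfl⟩ : ∃ m, n = m + 1 := ⟨n - 1, by omega⟩
  exact Network.decompose_s7 m N k F hF ks hpos hsum
end
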